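/- Define f₁(z) = -e^{-z} · Σ_{j=1}^∞ (z^j/j!) · j·log j and h(z) = -z·log z. Then for all z > 0, 0 ≤ f₁''(z)/h''(z) ≤ log 4, i.e., 0 ≤ -z·f₁''(z) ≤ log 4. -/

import Mathlib

open Real

noncomputable def aa (j : ℕ) : ℝ := (j : ℝ) * Real.log (j : ℝ)
noncomputable def uu (j : ℕ) : ℝ := aa j - 2 * aa (j+1) + aa (j+2)


lemma aa_abs (j : ℕ) : |aa j| ≤ ((j:ℝ)+2)^2 := by
  rcases Nat.eq_zero_or_pos j with h | h
  · simp [aa, h]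
  · have h1 : (1:ℝ) ≤ j := by exact_mod_cast h
    rw [aa, abs_of_nonneg (mul_nonneg (by positivity) (Real.log_nonneg h1))]
    have hlog : Real.log j ≤ (j:ℝ) := (Real.log_le_sub_one_of_pos (by linarith)).trans (by linarith)
    nlinarith [mul_le_mul_of_nonneg_left hlog (by positivity : (0:ℝ) ≤ (j:ℝ))]

lemma summable_aux (R : ℝ) (hR : 0 ≤ R) : Summable (fun n : ℕ => ((n:ℝ)+2)^3 * R^n / n.factorial) := by
  have key : ∀ n : ℕ, ((n:ℝ)+2)^3 * R^n / n.factorial ≤ 64 * ((8*R)^n / n.factorial) := by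
    intro n
    have h1 : (n:ℝ) ≤ 2^n := by exact_mod_cast (Nat.lt_two_pow_self (n := n)).le
    have h2 : ((n:ℝ)+2) ≤ 4 * 2^n := by
      have : (1:ℝ) ≤ 2^n := one_le_pow₀ (by norm_num)
      linarith
    have h3 : ((n:ℝ)+2)^3 ≤ 64 * 8^n := by
      calc ((n:ℝ)+2)^3 ≤ (4*2^n)^3 := by
            apply pow_le_pow_left₀ (by positivity) h2
        _ = 64 * 8^n := by
            rw [show (8:ℝ) = 2^3 by norm_num, mul_pow, ← pow_mul, mul_comm n 3, pow_mul]
            norm_num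
    have h4 : (8*R)^n = 8^n * R^n := mul_pow _ _ _
    rw [h4]
    have hf : (0:ℝ) < n.factorial := by exact_mod_cast n.factorial_pos
    rw [div_le_iff₀ hf]
    have : 64 * (8 ^ n * R ^ n / ↑n.factorial) * ↑n.factorial = 64 * 8^n * R^n := by
      field_simp
    rw [this]
    nlinarith [pow_nonneg hR n]
  apply Summable.of_nonneg_of_le (fun n => by positivity) key
  exact (Real.summable_pow_div_factorial (8*R)).mul_left 64


lemma term_norm_le (b : ℕ → ℝ) (hb : ∀ j, |b j| ≤ ((j:ℝ)+2)^2) (x : ℝ) (n : ℕ) :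
    ‖x ^ n / (n.factorial : ℝ) * b n‖ ≤ ((n:ℝ)+2)^3 * |x|^n / n.factorial := by
  have hf : (0:ℝ) < n.factorial := by exact_mod_cast n.factorial_pos
  rw [norm_mul, norm_div, Real.norm_eq_abs, Real.norm_eq_abs, Real.norm_eq_abs, abs_pow,
    Nat.abs_cast]
  calc |x|^n / (n.factorial:ℝ) * |b n| ≤ |x|^n / (n.factorial:ℝ) * ((n:ℝ)+2)^2 := by
        gcongr
        exact hb n
    _ ≤ ((n:ℝ)+2)^3 * |x|^n / n.factorial := by
        rw [div_mul_eq_mul_div, mul_comm (|x|^n), div_le_div_iff₀ hf hf]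
        have h5 : ((n:ℝ)+2)^2 ≤ ((n:ℝ)+2)^3 :=
          pow_le_pow_right₀ (by linarith [Nat.cast_nonneg (α := ℝ) n]) (by norm_num)
        have h6 : (0:ℝ) ≤ |x| ^ n := pow_nonneg (abs_nonneg x) n
        nlinarith [mul_le_mul_of_nonneg_right (mul_le_mul_of_nonneg_right h5 h6) hf.le]
  
lemma summable_term (b : ℕ → ℝ) (hb : ∀ j, |b j| ≤ ((j:ℝ)+2)^2) (x : ℝ) :
    Summable (fun j : ℕ => x ^ j / (j.factorial : ℝ) * b j) :=
  Summable.of_norm <| Summable.of_nonneg_of_le (fun n => norm_nonneg _)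
    (term_norm_le b hb x) (summable_aux |x| (abs_nonneg x))

lemma hasDerivAt_series (b : ℕ → ℝ) (hb : ∀ j, |b j| ≤ ((j:ℝ)+2)^2) (z : ℝ) :
    HasDerivAt (fun x => ∑' j : ℕ, x ^ j / (j.factorial : ℝ) * b j)
      (∑' j : ℕ, z ^ j / (j.factorial : ℝ) * b (j+1)) z := by
  set R : ℝ := |z| + 1 with hRdef
  have hz0 : (0:ℝ) ≤ |z| := abs_nonneg z
  have hR1 : (1:ℝ) ≤ R := by linarith
  have bound : ∀ (n : ℕ) (y : ℝ), y ∈ Metric.ball (0:ℝ) R →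
      ‖((n:ℝ) * y ^ (n-1)) / (n.factorial : ℝ) * b n‖ ≤ ((n:ℝ)+2)^3 * R^n / n.factorial := by
    intro n y hy
    have hyR : |y| ≤ R := by
      rw [Metric.mem_ball, Real.dist_eq, sub_zero] at hy
      linarith
    have hf : (0:ℝ) < n.factorial := by exact_mod_cast n.factorial_pos
    rw [norm_mul, norm_div, norm_mul, Real.norm_eq_abs, Real.norm_eq_abs, Real.norm_eq_abs,
      abs_pow, Nat.abs_cast, Nat.abs_cast]
    have h1 : |y|^(n-1) ≤ R^n :=
      (pow_le_pow_left₀ (abs_nonneg y) hyR _).trans (pow_le_pow_right₀ hR1 (Nat.sub_le n 1))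
    calc (n:ℝ) * |y|^(n-1) / (n.factorial:ℝ) * |b n|
          ≤ ((n:ℝ)+2) * R^n / (n.factorial:ℝ) * ((n:ℝ)+2)^2 := by
            gcongr
            · linarith [Nat.cast_nonneg (α := ℝ) n]
            · exact hb n
      _ = ((n:ℝ)+2)^3 * R^n / n.factorial := by ring
  have key : HasDerivAt (fun x => ∑' j : ℕ, x ^ j / (j.factorial : ℝ) * b j)
      (∑' j : ℕ, ((j:ℝ) * z ^ (j-1)) / (j.factorial : ℝ) * b j) z := by
    apply hasDerivAt_tsum_of_isPreconnected
      (u := fun n : ℕ => ((n:ℝ)+2)^3 * R^n / n.factorial)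
      (summable_aux R (by linarith)) (Metric.isOpen_ball (x := (0:ℝ)) (ε := R))
      ((convex_ball (0:ℝ) R).isPreconnected)
      (g' := fun n x => ((n:ℝ) * x ^ (n-1)) / (n.factorial : ℝ) * b n)
      ?_ bound (y₀ := 0) ?_ ?_ ?_
    · intro n y _
      exact ((hasDerivAt_pow n y).div_const _).mul_const _
    · exact Metric.mem_ball_self (by linarith)
    · exact summable_term b hb 0
    · rw [Metric.mem_ball, Real.dist_eq, sub_zero]
      linarith
  have hsum : Summable (fun j : ℕ => ((j:ℝ) * z ^ (j-1)) / (j.factorial : ℝ) * b j) :=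
    Summable.of_norm <| Summable.of_nonneg_of_le (fun n => norm_nonneg _)
      (fun n => bound n z (by rw [Metric.mem_ball, Real.dist_eq, sub_zero]; linarith))
      (summable_aux R (by linarith))
  have heq : (∑' j : ℕ, ((j:ℝ) * z ^ (j-1)) / (j.factorial : ℝ) * b j)
      = ∑' j : ℕ, z ^ j / (j.factorial : ℝ) * b (j+1) := by
    rw [hsum.tsum_eq_zero_add]
    simp only [Nat.cast_zero, zero_mul, zero_div, zero_add]
    congr 1
    funext n
    simp only [Nat.add_sub_cancel, Nat.factorial_succ]
    have hf : (0:ℝ) < n.factorial := by exact_mod_cast n.factorial_pos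
    push_cast
    field_simp
  rwa [heq] at key


lemma uu_nonneg (j : ℕ) : 0 ≤ uu j := by
  have h := Real.convexOn_mul_log.2 (x := (j:ℝ)) (y := (j:ℝ)+2)
    (by simp : (j:ℝ) ∈ Set.Ici (0:ℝ))
    (by simp [Set.mem_Ici]; positivity)
    (by norm_num : (0:ℝ) ≤ 1/2) (by norm_num : (0:ℝ) ≤ 1/2) (by norm_num)
  simp only [smul_eq_mul] at h
  have he : (1/2 : ℝ) * j + 1/2 * ((j:ℝ)+2) = (j:ℝ)+1 := by ring
  rw [he] at h
  simp only [uu, aa]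
  push_cast
  nlinarith [h]

lemma uu_le (j : ℕ) : ((j:ℝ)+1) * uu j ≤ Real.log 4 := by
  have l4 : Real.log 4 = 2 * Real.log 2 := by
    rw [show (4:ℝ) = 2^2 by norm_num, Real.log_pow]
    push_cast; ring
  match j with
  | 0 =>
    have h0 : uu 0 = 2 * Real.log 2 := by simp [uu, aa]
    rw [l4, h0]
    norm_num
  | 1 =>
    have h1' : uu 1 = 3 * Real.log 3 - 4 * Real.log 2 := by
      simp [uu, aa]
      ring
    have key : 6 * Real.log 3 ≤ 10 * Real.log 2 := by
      have : Real.log (3^6 : ℝ) ≤ Real.log (2^10 : ℝ) :=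
        Real.log_le_log (by norm_num) (by norm_num)
      rw [Real.log_pow, Real.log_pow] at this
      push_cast at this
      linarith
    rw [l4, h1']
    push_cast
    linarith
  | (n+2) =>
    set t : ℝ := ((n:ℕ):ℝ) + 2 with ht
    have ht2 : (2:ℝ) ≤ t := by simp [ht]
    have ht0 : (0:ℝ) < t := by linarith
    have ht1 : (0:ℝ) < t + 1 := by linarith
    have huu : uu (n+2) = (t+2) * Real.log (t+2) + t * Real.log t - 2*(t+1) * Real.log (t+1) := by
      simp only [uu, aa]
      push_cast
      ring
    have h1 : Real.log (t+2) - Real.log (t+1) ≤ 1/(t+1) := by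
      have hp : (0:ℝ) < (t+2)/(t+1) := by positivity
      have := Real.log_le_sub_one_of_pos hp
      rw [Real.log_div (by linarith) (by linarith)] at this
      have he : (t+2)/(t+1) - 1 = 1/(t+1) := by
        field_simp <;> norm_num
      linarith [he ▸ this]
    have h2 : Real.log t + Real.log (t+2) - 2 * Real.log (t+1) ≤ -(1/(t+1)^2) := by
      have hp : (0:ℝ) < t*(t+2)/(t+1)^2 := by positivity
      have := Real.log_le_sub_one_of_pos hp
      rw [Real.log_div (by positivity) (by positivity), Real.log_mul (by linarith) (by linarith),
        Real.log_pow] at this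
      have he : t*(t+2)/(t+1)^2 - 1 = -(1/(t+1)^2) := by field_simp; ring
      push_cast at this
      linarith [he ▸ this]
    have hexp : uu (n+2) = 2*(Real.log (t+2) - Real.log (t+1))
        + t * (Real.log t + Real.log (t+2) - 2 * Real.log (t+1)) := by
      rw [huu]; ring
    have hub : uu (n+2) ≤ 2/(t+1) - t/(t+1)^2 := by
      rw [hexp]
      have := mul_le_mul_of_nonneg_left h2 (by linarith : (0:ℝ) ≤ t)
      have h1' := mul_le_mul_of_nonneg_left h1 (by norm_num : (0:ℝ) ≤ (2:ℝ))
      have hid1 : t * -(1/(t+1)^2) = -(t/(t+1)^2) := by ring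
      have hid2 : 2 * (1/(t+1)) = 2/(t+1) := by ring
      linarith
    have hj : ((n+2:ℕ):ℝ) + 1 = t + 1 := by push_cast; ring
    rw [hj]
    have hlog2 : (0.6931471803:ℝ) < Real.log 2 := Real.log_two_gt_d9
    have hfinal : (t+1) * uu (n+2) ≤ (t+2)/(t+1) := by
      have := mul_le_mul_of_nonneg_left hub (by linarith : (0:ℝ) ≤ t+1)
      calc (t+1) * uu (n+2) ≤ (t+1) * (2/(t+1) - t/(t+1)^2) := this
        _ = (t+2)/(t+1) := by field_simp; ring
    have : (t+2)/(t+1) ≤ 4/3 := by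
      rw [div_le_div_iff₀ ht1 (by norm_num)]
      linarith
    have h43 : (4:ℝ)/3 ≤ Real.log 4 := by
      rw [l4]
      nlinarith [hlog2]
    exact hfinal.trans (this.trans h43)


lemma aa_abs2 (j : ℕ) : |aa j| ≤ (j:ℝ)^2 := by
  rcases Nat.eq_zero_or_pos j with h | h
  · simp [aa, h]
  · have h1 : (1:ℝ) ≤ j := by exact_mod_cast h
    rw [aa, abs_of_nonneg (mul_nonneg (by positivity) (Real.log_nonneg h1))]
    have hlog : Real.log j ≤ (j:ℝ) := (Real.log_le_sub_one_of_pos (by linarith)).trans (by linarith)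
    nlinarith [mul_le_mul_of_nonneg_left hlog (by positivity : (0:ℝ) ≤ (j:ℝ))]

lemma aa_shift {k : ℕ} (hk : k ≤ 2) (j : ℕ) : |aa (j+k)| ≤ ((j:ℝ)+2)^2 := by
  refine (aa_abs2 (j+k)).trans ?_
  have hk' : (k:ℝ) ≤ 2 := by exact_mod_cast hk
  push_cast
  apply pow_le_pow_left₀ (by positivity)
  linarith

/-- The shifted series. -/
noncomputable def gS (k : ℕ) (z : ℝ) : ℝ := ∑' j : ℕ, z ^ j / (j.factorial : ℝ) * aa (j + k)

lemma hDg {k : ℕ} (hk : k ≤ 1) (z : ℝ) : HasDerivAt (gS k) (gS (k+1) z) z := by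
  have h := hasDerivAt_series (fun j => aa (j + k)) (aa_shift (by omega)) z
  have he : (∑' j : ℕ, z ^ j / (j.factorial : ℝ) * aa (j + 1 + k)) = gS (k+1) z := by
    unfold gS
    congr 1
    funext j
    congr 2
    omega
  rw [he] at h
  exact h

/-- `f₁(z) = -e^{-z} ∑_{j≥1} (z^j/j!) j log j` (the `j = 0` term vanishes). -/
noncomputable def fOne (z : ℝ) : ℝ :=
  -(Real.exp (-z) * ∑' j : ℕ, z ^ j / (j.factorial : ℝ) * ((j : ℝ) * Real.log (j : ℝ)))

lemma fOne_eq : fOne = fun z => -(Real.exp (-z) * gS 0 z) := by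
  funext z
  simp only [fOne, gS, Nat.add_zero, aa]

lemma hD1 (z : ℝ) : HasDerivAt fOne (Real.exp (-z) * (gS 0 z - gS 1 z)) z := by
  have hexp : HasDerivAt (fun x : ℝ => Real.exp (-x)) (Real.exp (-z) * (-1)) z :=
    (Real.hasDerivAt_exp (-z)).comp z (hasDerivAt_neg z)
  have h := (hexp.mul (hDg (by omega : 0 ≤ 1) z)).neg
  rw [fOne_eq]
  refine h.congr_deriv ?_
  simp only [zero_add, Nat.reduceAdd]
  ring

lemma deriv_fOne : deriv fOne = fun z => Real.exp (-z) * (gS 0 z - gS 1 z) :=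
  funext fun z => (hD1 z).deriv

lemma hD2 (z : ℝ) :
    HasDerivAt (deriv fOne) (Real.exp (-z) * (2 * gS 1 z - gS 0 z - gS 2 z)) z := by
  rw [deriv_fOne]
  have hexp : HasDerivAt (fun x : ℝ => Real.exp (-x)) (Real.exp (-z) * (-1)) z :=
    (Real.hasDerivAt_exp (-z)).comp z (hasDerivAt_neg z)
  have h := hexp.mul ((hDg (by omega : 0 ≤ 1) z).sub (hDg (by omega : 1 ≤ 1) z))
  refine h.congr_deriv ?_
  simp only [zero_add, Nat.reduceAdd, Pi.sub_apply]
  ring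

lemma deriv2_fOne (z : ℝ) :
    deriv (deriv fOne) z = Real.exp (-z) * (2 * gS 1 z - gS 0 z - gS 2 z) :=
  (hD2 z).deriv

lemma gS_summable (k : ℕ) (hk : k ≤ 2) (z : ℝ) :
    Summable (fun j : ℕ => z ^ j / (j.factorial : ℝ) * aa (j + k)) :=
  summable_term _ (aa_shift hk) z

lemma gS_combine (z : ℝ) :
    gS 0 z + gS 2 z - 2 * gS 1 z = ∑' j : ℕ, z ^ j / (j.factorial : ℝ) * uu j := by
  have h0 := gS_summable 0 (by omega) z
  have h1 := gS_summable 1 (by omega) z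
  have h2 := gS_summable 2 (by omega) z
  unfold gS
  rw [show (2 : ℝ) * ∑' j : ℕ, z ^ j / (j.factorial : ℝ) * aa (j + 1)
      = ∑' j : ℕ, 2 * (z ^ j / (j.factorial : ℝ) * aa (j + 1)) from (tsum_mul_left).symm,
    ← h0.tsum_add h2, ← (h0.add h2).tsum_sub (h1.mul_left 2)]
  congr 1
  funext j
  simp only [uu]
  ring

theorem stmt_5 (z : ℝ) (hz : 0 < z) :
    0 ≤ -z * deriv (deriv fOne) z ∧ -z * deriv (deriv fOne) z ≤ Real.log 4 := by
  have hmain : -z * deriv (deriv fOne) z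
      = Real.exp (-z) * (z * ∑' j : ℕ, z ^ j / (j.factorial : ℝ) * uu j) := by
    rw [deriv2_fOne, ← gS_combine]
    ring
  have hSsum : Summable (fun j : ℕ => z ^ j / (j.factorial : ℝ) * uu j) := by
    have h0 := gS_summable 0 (by omega) z
    have h1 := gS_summable 1 (by omega) z
    have h2 := gS_summable 2 (by omega) z
    apply ((h0.add h2).sub (h1.mul_left 2)).congr
    intro j
    simp only [uu]
    ring
  have hterm_nonneg : ∀ j : ℕ, 0 ≤ z ^ j / (j.factorial : ℝ) * uu j := by
    intro j
    have hf : (0:ℝ) < j.factorial := by exact_mod_cast j.factorial_pos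
    exact mul_nonneg (by positivity) (uu_nonneg j)
  have hS_nonneg : 0 ≤ ∑' j : ℕ, z ^ j / (j.factorial : ℝ) * uu j :=
    tsum_nonneg hterm_nonneg
  constructor
  · rw [hmain]
    have := Real.exp_pos (-z)
    positivity
  · rw [hmain]
    have hexpz : Real.exp z = ∑' n : ℕ, z ^ n / (n.factorial : ℝ) := by
      rw [Real.exp_eq_exp_ℝ, NormedSpace.exp_eq_tsum_div]
    have hsummexp := Real.summable_pow_div_factorial z
    have htail : Summable (fun j : ℕ => z ^ (j+1) / ((j+1).factorial : ℝ)) :=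
      hsummexp.comp_injective Nat.succ_injective
    have htail_eq : (∑' j : ℕ, z ^ (j+1) / ((j+1).factorial : ℝ)) = Real.exp z - 1 := by
      have h := hsummexp.tsum_eq_zero_add
      rw [← hexpz] at h
      simp only [pow_zero, Nat.factorial_zero, Nat.cast_one] at h
      linarith [h]
    have hbound : ∀ j : ℕ, z * (z ^ j / (j.factorial : ℝ) * uu j)
        ≤ Real.log 4 * (z ^ (j+1) / ((j+1).factorial : ℝ)) := by
      intro j
      have hf : (0:ℝ) < j.factorial := by exact_mod_cast j.factorial_pos
      have hfs : ((j+1).factorial : ℝ) = (j.factorial : ℝ) * ((j:ℝ)+1) := by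
        rw [Nat.factorial_succ]
        push_cast
        ring
      have key : uu j ≤ Real.log 4 / ((j:ℝ)+1) := by
        rw [le_div_iff₀ (by positivity)]
        linarith [uu_le j]
      calc z * (z ^ j / (j.factorial : ℝ) * uu j) = z^(j+1) / (j.factorial : ℝ) * uu j := by
            rw [pow_succ]
            ring
        _ ≤ z^(j+1) / (j.factorial : ℝ) * (Real.log 4 / ((j:ℝ)+1)) := by
            apply mul_le_mul_of_nonneg_left key (by positivity)
        _ = Real.log 4 * (z ^ (j+1) / ((j+1).factorial : ℝ)) := by
            rw [hfs]
            field_simp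
    have hzS : z * (∑' j : ℕ, z ^ j / (j.factorial : ℝ) * uu j)
        = ∑' j : ℕ, z * (z ^ j / (j.factorial : ℝ) * uu j) := tsum_mul_left.symm
    have hle : z * (∑' j : ℕ, z ^ j / (j.factorial : ℝ) * uu j)
        ≤ Real.log 4 * (Real.exp z - 1) := by
      rw [hzS]
      calc (∑' j : ℕ, z * (z ^ j / (j.factorial : ℝ) * uu j))
          ≤ ∑' j : ℕ, Real.log 4 * (z ^ (j+1) / ((j+1).factorial : ℝ)) :=
            Summable.tsum_le_tsum hbound (hSsum.mul_left z) (htail.mul_left _)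
        _ = Real.log 4 * (Real.exp z - 1) := by rw [tsum_mul_left, htail_eq]
    have hlog4 : (0:ℝ) ≤ Real.log 4 := Real.log_nonneg (by norm_num)
    calc Real.exp (-z) * (z * ∑' j : ℕ, z ^ j / (j.factorial : ℝ) * uu j)
        ≤ Real.exp (-z) * (Real.log 4 * Real.exp z) := by
          apply mul_le_mul_of_nonneg_left ?_ (Real.exp_pos (-z)).le
          have : Real.log 4 * (Real.exp z - 1) ≤ Real.log 4 * Real.exp z := by nlinarith
          linarith
      _ = Real.log 4 := by
          rw [Real.exp_neg]
          field_simp
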